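/- For every graph H containing no induced cycle, no induced claw K_{1,3}, and no induced copy of 2P2+P1 (the disjoint union of two edges and an isolated vertex), one of the following holds: H is isomorphic to 2P3 (the disjoint union of two 3-vertex paths); H is an induced subgraph of P6; or there exists k ≥ 0 such that H is an induced subgraph of P4 + kP1 (a 4-vertex path plus k isolated vertices). -/

import Mathlib

open SimpleGraph

/-- The claw `K_{1,3}`: vertex `0` adjacent to `1`, `2`, `3`. -/
def clawGraph : SimpleGraph (Fin 4) :=
  SimpleGraph.fromRel (fun a b => a = 0 ∧ b ≠ 0)

/-- `2P2 + P1`: the disjoint union of two edges and an isolated vertex. -/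
def twoP2P1 : SimpleGraph (Fin 5) :=
  SimpleGraph.fromRel (fun a b => (a = 0 ∧ b = 1) ∨ (a = 2 ∧ b = 3))

/-- `2P3`: the disjoint union of two paths on three vertices. -/
def twoP3 : SimpleGraph (Fin 6) :=
  SimpleGraph.fromRel (fun a b =>
    (a = 0 ∧ b = 1) ∨ (a = 1 ∧ b = 2) ∨ (a = 3 ∧ b = 4) ∨ (a = 4 ∧ b = 5))

/-- `P4 + kP1`: a path on four vertices together with `k` isolated vertices. -/
def P4kP1 (k : ℕ) : SimpleGraph (Fin (4 + k)) :=
  SimpleGraph.fromRel (fun a b => a.val + 1 = b.val ∧ b.val < 4)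

namespace Stmt7Aux

variable {W : Type*} {G : SimpleGraph W}

lemma emb0 (G : SimpleGraph W) : Nonempty (pathGraph 0 ↪g G) :=
  ⟨⟨⟨Fin.elim0, fun a => a.elim0⟩, fun {a} => a.elim0⟩⟩

lemma card_bound [Fintype W] {k : ℕ} (f : pathGraph k ↪g G) : k ≤ Fintype.card W := by
  simpa using Fintype.card_le_of_embedding f.toEmbedding

lemma transfer {α : Type*} {F : SimpleGraph α} {s : Set W} :
    Nonempty (F ↪g G.induce s) → Nonempty (F ↪g G) :=
  fun ⟨f⟩ => ⟨(Embedding.induce s).comp f⟩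

lemma fin_sub_val_one {N : ℕ} (hN : 2 ≤ N) (a b : Fin N) :
    (a - b).val = 1 ↔ (a.val = b.val + 1 ∨ (b.val + 1 = N ∧ a.val = 0)) := by
  have ha := a.isLt
  have hb := b.isLt
  rw [Fin.sub_def]
  rcases le_or_gt b.val a.val with h | h
  · have hE : N - b.val + a.val = N + (a.val - b.val) := by omega
    have h2 : (a.val - b.val) % N = a.val - b.val := Nat.mod_eq_of_lt (by omega)
    rw [Fin.val_mk, hE, Nat.add_mod_left, h2]
    omega
  · have h2 : (N - b.val + a.val) % N = N - b.val + a.val := Nat.mod_eq_of_lt (by omega)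
    rw [Fin.val_mk, h2]
    omega

lemma cycle_adj_iff {N : ℕ} (hN : 2 ≤ N) (a b : Fin N) :
    (cycleGraph N).Adj a b ↔
      ((a.val = b.val + 1 ∨ (b.val + 1 = N ∧ a.val = 0)) ∨
       (b.val = a.val + 1 ∨ (a.val + 1 = N ∧ b.val = 0))) := by
  rw [cycleGraph_adj', fin_sub_val_one hN, fin_sub_val_one hN]

/-- build an embedding of `pathGraph 2` from an edge -/
lemma emb_P2 {a b : W} (hab : G.Adj a b) : Nonempty (pathGraph 2 ↪g G) := by
  have h1 := hab.symm
  refine ⟨⟨⟨![a, b], ?_⟩, ?_⟩⟩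
  · intro i j hij
    fin_cases i <;> fin_cases j <;> simp_all [hab.ne, hab.ne']
  · intro i j
    fin_cases i <;> fin_cases j <;>
      simp [DFunLike.coe, pathGraph_adj, hab, h1, G.irrefl]

lemma emb_triangle {a b c : W} (hab : G.Adj a b) (hbc : G.Adj b c) (hac : G.Adj a c) :
    Nonempty (cycleGraph 3 ↪g G) := by
  have h1 := hab.symm; have h2 := hbc.symm; have h3 := hac.symm
  refine ⟨⟨⟨![a, b, c], ?_⟩, ?_⟩⟩
  · intro i j hij
    fin_cases i <;> fin_cases j <;> simp_all [hab.ne, hab.ne', hbc.ne, hbc.ne', hac.ne, hac.ne']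
  · intro i j
    fin_cases i <;> fin_cases j <;>
      simp [DFunLike.coe, cycleGraph_adj, hab, hbc, hac, h1, h2, h3, G.irrefl] <;> decide

lemma emb_claw {c x y z : W} (hxy : x ≠ y) (hxz : x ≠ z) (hyz : y ≠ z)
    (h1 : G.Adj c x) (h2 : G.Adj c y) (h3 : G.Adj c z)
    (n1 : ¬ G.Adj x y) (n2 : ¬ G.Adj x z) (n3 : ¬ G.Adj y z) :
    Nonempty (clawGraph ↪g G) := by
  have h1' := h1.symm; have h2' := h2.symm; have h3' := h3.symm
  have n1' : ¬ G.Adj y x := fun h => n1 h.symm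
  have n2' : ¬ G.Adj z x := fun h => n2 h.symm
  have n3' : ¬ G.Adj z y := fun h => n3 h.symm
  refine ⟨⟨⟨![c, x, y, z], ?_⟩, ?_⟩⟩
  · intro i j hij
    fin_cases i <;> fin_cases j <;>
      simp_all [h1.ne, h1.ne', h2.ne, h2.ne', h3.ne, h3.ne']
  · intro i j
    fin_cases i <;> fin_cases j <;>
      simp_all [DFunLike.coe, clawGraph, fromRel_adj, G.irrefl,
        hxy, hxz, hyz, hxy.symm, hxz.symm, hyz.symm, h1.ne', h2.ne', h3.ne'] <;> decide

lemma emb_twoP2P1 {a b c d e : W}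
    (hab : G.Adj a b) (hcd : G.Adj c d)
    (hac : a ≠ c) (had : a ≠ d) (hbc : b ≠ c) (hbd : b ≠ d)
    (hae : a ≠ e) (hbe : b ≠ e) (hce : c ≠ e) (hde : d ≠ e)
    (nac : ¬ G.Adj a c) (nad : ¬ G.Adj a d) (nbc : ¬ G.Adj b c) (nbd : ¬ G.Adj b d)
    (nae : ¬ G.Adj a e) (nbe : ¬ G.Adj b e) (nce : ¬ G.Adj c e) (nde : ¬ G.Adj d e) :
    Nonempty (twoP2P1 ↪g G) := by
  have hab' := hab.symm; have hcd' := hcd.symm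
  have nac' : ¬ G.Adj c a := fun h => nac h.symm
  have nad' : ¬ G.Adj d a := fun h => nad h.symm
  have nbc' : ¬ G.Adj c b := fun h => nbc h.symm
  have nbd' : ¬ G.Adj d b := fun h => nbd h.symm
  have nae' : ¬ G.Adj e a := fun h => nae h.symm
  have nbe' : ¬ G.Adj e b := fun h => nbe h.symm
  have nce' : ¬ G.Adj e c := fun h => nce h.symm
  have nde' : ¬ G.Adj e d := fun h => nde h.symm
  refine ⟨⟨⟨![a, b, c, d, e], ?_⟩, ?_⟩⟩
  · intro i j hij
    fin_cases i <;> fin_cases j <;>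
      simp_all [hab.ne, hab.ne', hcd.ne, hcd.ne']
  · intro i j
    fin_cases i <;> fin_cases j <;>
      simp_all [DFunLike.coe, twoP2P1, fromRel_adj, G.irrefl, hac, had, hbc, hbd, hae, hbe, hce, hde,
        hac.symm, had.symm, hbc.symm, hbd.symm, hae.symm, hbe.symm, hce.symm, hde.symm] <;>
      decide

/-- reversal automorphism of the path graph -/
def revIso (m : ℕ) : pathGraph m ≃g pathGraph m where
  toFun := fun i => ⟨m - 1 - i.val, by omega⟩
  invFun := fun i => ⟨m - 1 - i.val, by omega⟩
  left_inv := fun i => by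
    have := i.isLt; ext; simp; omega
  right_inv := fun i => by
    have := i.isLt; ext; simp; omega
  map_rel_iff' := by
    intro i j
    have hi := i.isLt; have hj := j.isLt
    simp only [Equiv.coe_fn_mk, pathGraph_adj]
    omega

/-- extend a path by a vertex adjacent to its first vertex -/
lemma emb_extend {m : ℕ} (p : pathGraph m ↪g G) (hm : 0 < m)
    (v : W) (hv : ∀ i, v ≠ p i)
    (h0 : G.Adj v (p ⟨0, hm⟩))
    (hrest : ∀ i : Fin m, i.val ≠ 0 → ¬ G.Adj v (p i)) :
    Nonempty (pathGraph (m + 1) ↪g G) := by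
  have hpp : ∀ i j : Fin m, G.Adj (p i) (p j) ↔ (i.val + 1 = j.val ∨ j.val + 1 = i.val) := by
    intro i j; rw [p.map_rel_iff, pathGraph_adj]
  have hadj : ∀ i : Fin m, G.Adj v (p i) ↔ i.val = 0 := by
    intro i
    constructor
    · intro h; by_contra h'; exact hrest i h' h
    · intro h; convert h0 using 2; ext; exact h
  refine ⟨⟨⟨fun j => if h : j.val = 0 then v else p ⟨j.val - 1, by omega⟩, ?_⟩, ?_⟩⟩
  · intro i j hij
    by_cases h1 : i.val = 0 <;> by_cases h2 : j.val = 0 <;> simp [h1, h2] at hij ⊢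
    · ext; omega
    · exact absurd hij (hv _)
    · exact absurd hij.symm (hv _)
    · ext; omega
  · intro i j
    have hi := i.isLt; have hj := j.isLt
    simp only [Function.Embedding.coeFn_mk, pathGraph_adj]
    show G.Adj (if h : i.val = 0 then v else p ⟨i.val - 1, by omega⟩) (if h : j.val = 0 then v else p ⟨j.val - 1, by omega⟩) ↔ _
    by_cases h1 : i.val = 0 <;> by_cases h2 : j.val = 0
    · rw [dif_pos h1, dif_pos h2]; simp [G.irrefl]; omega
    · rw [dif_pos h1, dif_neg h2, hadj]; simp; omega
    · rw [dif_neg h1, dif_pos h2, G.adj_comm, hadj]; simp; omega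
    · rw [dif_neg h1, dif_neg h2, hpp]; simp; omega

/-- close a maximal path into a cycle -/
lemma emb_cycle {m : ℕ} (p : pathGraph m ↪g G) (hm : 2 ≤ m)
    (v : W) (hv : ∀ i, v ≠ p i)
    (h0 : G.Adj v (p ⟨0, by omega⟩)) (hlast : G.Adj v (p ⟨m - 1, by omega⟩))
    (hmid : ∀ i : Fin m, i.val ≠ 0 → i.val ≠ m - 1 → ¬ G.Adj v (p i)) :
    Nonempty (cycleGraph (m + 1) ↪g G) := by
  have hpp : ∀ i j : Fin m, G.Adj (p i) (p j) ↔ (i.val + 1 = j.val ∨ j.val + 1 = i.val) := by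
    intro i j; rw [p.map_rel_iff, pathGraph_adj]
  have hadj : ∀ i : Fin m, G.Adj v (p i) ↔ (i.val = 0 ∨ i.val = m - 1) := by
    intro i
    constructor
    · intro h; by_contra h'; push_neg at h'; exact hmid i h'.1 h'.2 h
    · rintro (h | h)
      · convert h0 using 2; ext; exact h
      · convert hlast using 2; ext; exact h
  have hcyc : ∀ a b : Fin (m + 1), (cycleGraph (m + 1)).Adj a b ↔
      ((a.val = b.val + 1 ∨ (b.val + 1 = m + 1 ∧ a.val = 0)) ∨
       (b.val = a.val + 1 ∨ (a.val + 1 = m + 1 ∧ b.val = 0))) := by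
    intro a b
    rw [cycleGraph_adj', fin_sub_val_one (by omega), fin_sub_val_one (by omega)]
  refine ⟨⟨⟨fun j => if h : j.val < m then p ⟨j.val, h⟩ else v, ?_⟩, ?_⟩⟩
  · intro i j hij
    have hi := i.isLt; have hj := j.isLt
    by_cases h1 : i.val < m <;> by_cases h2 : j.val < m <;> simp [h1, h2] at hij ⊢
    · ext; omega
    · exact absurd hij.symm (hv _)
    · exact absurd hij (hv _)
    · ext; omega
  · intro i j
    have hi := i.isLt; have hj := j.isLt
    rw [hcyc]
    show G.Adj (if h : i.val < m then p ⟨i.val, h⟩ else v) (if h : j.val < m then p ⟨j.val, h⟩ else v) ↔ _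
    by_cases h1 : i.val < m <;> by_cases h2 : j.val < m
    · rw [dif_pos h1, dif_pos h2, hpp]; simp; omega
    · rw [dif_pos h1, dif_neg h2, G.adj_comm, hadj]; simp; omega
    · rw [dif_neg h1, dif_pos h2, hadj]; simp; omega
    · rw [dif_neg h1, dif_neg h2]; simp only [G.irrefl, false_iff]; omega


lemma revIso_apply (m : ℕ) (i : Fin m) : (revIso m) i = ⟨m - 1 - i.val, by omega⟩ := rfl

lemma maxpath_no_adj (G : SimpleGraph W)
    (hcyc : ∀ n, 3 ≤ n → ¬ Nonempty (cycleGraph n ↪g G))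
    (hclaw : ¬ Nonempty (clawGraph ↪g G))
    {m : ℕ} (p : pathGraph m ↪g G)
    (hmax : ¬ Nonempty (pathGraph (m + 1) ↪g G))
    (v : W) (hv : ∀ i, v ≠ p i) :
    ∀ i, ¬ G.Adj v (p i) := by
  have hpp : ∀ i j : Fin m, G.Adj (p i) (p j) ↔ (i.val + 1 = j.val ∨ j.val + 1 = i.val) := by
    intro i j; rw [p.map_rel_iff, pathGraph_adj]
  have step1 : ∀ i j : Fin m, i.val + 1 = j.val → G.Adj v (p i) → G.Adj v (p j) → False := by
    intro i j hij h1 h2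
    exact hcyc 3 le_rfl (emb_triangle h1 ((hpp i j).mpr (Or.inl hij)) h2)
  have step2 : ∀ i : Fin m, 0 < i.val → i.val + 1 < m → ¬ G.Adj v (p i) := by
    intro i hi0 him hadj
    set im : Fin m := ⟨i.val - 1, by omega⟩ with him_def
    set ip : Fin m := ⟨i.val + 1, by omega⟩ with hip_def
    have h1 : G.Adj (p i) (p im) := (hpp _ _).mpr (by simp [him_def]; omega)
    have h2 : G.Adj (p i) (p ip) := (hpp _ _).mpr (by simp [hip_def]; try omega)
    have nvm : ¬ G.Adj v (p im) := fun h => step1 im i (by simp [him_def]; omega) h hadj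
    have nvp : ¬ G.Adj v (p ip) := fun h => step1 i ip (by simp [hip_def]; try omega) hadj h
    have nmp : ¬ G.Adj (p im) (p ip) := by
      rw [hpp]; simp [him_def, hip_def]; omega
    have hmp : p im ≠ p ip := by
      intro h
      have := p.injective h
      rw [him_def, hip_def, Fin.mk.injEq] at this
      omega
    exact hclaw (emb_claw (hv im) (hv ip) hmp hadj.symm h1 h2 nvm nvp nmp)
  intro i hadj
  have hm : 0 < m := i.pos
  have hends : ∀ j : Fin m, G.Adj v (p j) → j.val = 0 ∨ j.val = m - 1 := by
    intro j hj
    by_contra hcon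
    push_neg at hcon
    have hjl := j.isLt
    exact step2 j (by omega) (by omega) hj
  by_cases hA0 : G.Adj v (p ⟨0, hm⟩)
  · by_cases hAl : G.Adj v (p ⟨m - 1, by omega⟩)
    · rcases Nat.lt_or_ge m 2 with h2 | h2
      · -- m = 1 : extend
        refine hmax (emb_extend p hm v hv hA0 ?_)
        intro j hj0 _
        have := j.isLt; omega
      · -- m ≥ 2 : cycle
        refine hcyc (m + 1) (by omega) (emb_cycle p h2 v hv hA0 hAl ?_)
        intro j hj0 hjl hj
        rcases hends j hj with h | h <;> omega
    · -- only first endpoint : extend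
      refine hmax (emb_extend p hm v hv hA0 ?_)
      intro j hj0 hj
      rcases hends j hj with h | h
      · omega
      · exact hAl (by convert hj using 2; ext; simp [h])
  · -- not adjacent to first endpoint
    have hAl : G.Adj v (p ⟨m - 1, by omega⟩) := by
      rcases hends i hadj with h | h
      · exact absurd (by convert hadj using 2; ext; simp [h]) hA0
      · convert hadj using 2; ext; simp [h]
    -- reverse the path and extend
    set p' : pathGraph m ↪g G := p.comp (revIso m).toEmbedding with hp'
    have hp'app : ∀ j : Fin m, p' j = p ⟨m - 1 - j.val, by omega⟩ := by
      intro j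
      simp [hp', Embedding.comp, revIso_apply]
    refine hmax (emb_extend p' hm v (fun j => by rw [hp'app]; exact hv _) ?_ ?_)
    · rw [hp'app]
      convert hAl using 2
      simp
    · intro j hj0 hj
      rw [hp'app] at hj
      rcases hends _ hj with h | h
      · simp at h
        have := j.isLt
        refine hA0 ?_
        convert hj using 2
        ext; simp; omega
      · simp at h
        have := j.isLt
        omega
end Stmt7Aux

namespace Stmt7Aux
variable {V : Type*} {H : SimpleGraph V}

/-- build an embedding from a vertex-set equivalence plus an injective slot map -/
def emb_of_equiv {α : Type*} {N : ℕ} {T : SimpleGraph (Fin N)} (e : α ≃ V) (σ : α → Fin N)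
    (hσ : Function.Injective σ)
    (h : ∀ a b : α, T.Adj (σ a) (σ b) ↔ H.Adj (e a) (e b)) : H ↪g T :=
  ⟨⟨fun v => σ (e.symm v), hσ.comp e.symm.injective⟩, by
    intro u w
    simp only [Function.Embedding.coeFn_mk]
    rw [h (e.symm u) (e.symm w), e.apply_symm_apply, e.apply_symm_apply]⟩

/-- build an isomorphism from a vertex-set equivalence plus a slot equivalence -/
def iso_of_equiv {α : Type*} {N : ℕ} {T : SimpleGraph (Fin N)} (e : α ≃ V) (τ : α ≃ Fin N)
    (h : ∀ a b : α, T.Adj (τ a) (τ b) ↔ H.Adj (e a) (e b)) : H ≃g T :=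
  ⟨e.symm.trans τ, by
    intro u w
    simp only [Equiv.trans_apply]
    rw [h (e.symm u) (e.symm w), e.apply_symm_apply, e.apply_symm_apply]⟩

end Stmt7Aux

theorem stmt_7 {V : Type*} [Fintype V] (H : SimpleGraph V)
    (hcyc : ∀ n, 3 ≤ n → ¬ Nonempty (cycleGraph n ↪g H))
    (hclaw : ¬ Nonempty (clawGraph ↪g H))
    (h2P2P1 : ¬ Nonempty (twoP2P1 ↪g H)) :
    Nonempty (H ≃g twoP3) ∨ Nonempty (H ↪g pathGraph 6) ∨
      ∃ k : ℕ, Nonempty (H ↪g P4kP1 k) := by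
  classical
  obtain ⟨m, ⟨p⟩, hmaxm⟩ : ∃ m : ℕ, Nonempty (pathGraph m ↪g H) ∧
      ∀ k, Nonempty (pathGraph k ↪g H) → k ≤ m :=
    ⟨Nat.findGreatest (fun k => Nonempty (pathGraph k ↪g H)) (Fintype.card V),
      Nat.findGreatest_spec (P := fun k => Nonempty (pathGraph k ↪g H)) (Nat.zero_le _) (Stmt7Aux.emb0 H),
      fun k hk => Nat.le_findGreatest (Stmt7Aux.card_bound hk.some) hk⟩
  have hmaxH : ¬ Nonempty (pathGraph (m + 1) ↪g H) := fun h => by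
    have := hmaxm _ h; omega
  have hpp : ∀ i j : Fin m, H.Adj (p i) (p j) ↔ (i.val + 1 = j.val ∨ j.val + 1 = i.val) := by
    intro i j; rw [p.map_rel_iff, pathGraph_adj]
  have hpne : ∀ i j : Fin m, i.val ≠ j.val → p i ≠ p j := by
    intro i j hij h
    exact hij (congrArg Fin.val (p.injective h))
  set R : Set V := {v | ∀ i, v ≠ p i} with hR_def
  have hA : ∀ v ∈ R, ∀ i, ¬ H.Adj v (p i) := fun v hv =>
    Stmt7Aux.maxpath_no_adj H hcyc hclaw p hmaxH v hv
  have hcyc' : ∀ k, 3 ≤ k → ¬ Nonempty (cycleGraph k ↪g H.induce R) :=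
    fun k hk h => hcyc k hk (Stmt7Aux.transfer h)
  have hclaw' : ¬ Nonempty (clawGraph ↪g H.induce R) := fun h => hclaw (Stmt7Aux.transfer h)
  obtain ⟨n, ⟨q⟩, hmaxn⟩ : ∃ n : ℕ, Nonempty (pathGraph n ↪g H.induce R) ∧
      ∀ k, Nonempty (pathGraph k ↪g H.induce R) → k ≤ n :=
    ⟨Nat.findGreatest (fun k => Nonempty (pathGraph k ↪g H.induce R)) (Fintype.card V),
      Nat.findGreatest_spec (P := fun k => Nonempty (pathGraph k ↪g H.induce R)) (Nat.zero_le _) (Stmt7Aux.emb0 _),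
      fun k hk => Nat.le_findGreatest (Stmt7Aux.card_bound (Stmt7Aux.transfer hk).some) hk⟩
  have hmaxn' : ¬ Nonempty (pathGraph (n + 1) ↪g H.induce R) := fun h => by
    have := hmaxn _ h; omega
  have hnm : n ≤ m := hmaxm n (Stmt7Aux.transfer ⟨q⟩)
  have hqq : ∀ j j' : Fin n, H.Adj (q j).1 (q j').1 ↔ (j.val + 1 = j'.val ∨ j'.val + 1 = j.val) := by
    intro j j'
    have h1 : H.Adj (q j).1 (q j').1 ↔ (pathGraph n).Adj j j' := q.map_rel_iff
    rw [h1, pathGraph_adj]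
  have hqmem : ∀ (j : Fin n) (i : Fin m), (q j).1 ≠ p i := fun j i => (q j).2 i
  have hqne : ∀ j j' : Fin n, j.val ≠ j'.val → (q j).1 ≠ (q j').1 := by
    intro j j' hij h
    exact hij (congrArg Fin.val (q.injective (Subtype.ext h)))
  have hB : ∀ w, w ∈ R → (∀ j, w ≠ (q j).1) → ∀ j, ¬ H.Adj w (q j).1 := by
    intro w hw hwq j
    exact Stmt7Aux.maxpath_no_adj (H.induce R) hcyc' hclaw' q hmaxn' ⟨w, hw⟩
      (fun j' h => hwq j' (congrArg Subtype.val h)) j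
  rcases Nat.lt_or_ge n 2 with hn2 | hn2
  · -- Case A : R is a set of isolated vertices
    have hiso : ∀ v ∈ R, ∀ w, ¬ H.Adj v w := by
      intro v hv w hadj
      by_cases hwR : w ∈ R
      · have h2 : Nonempty (pathGraph 2 ↪g H.induce R) :=
          Stmt7Aux.emb_P2 (G := H.induce R) (a := ⟨v, hv⟩) (b := ⟨w, hwR⟩) hadj
        have := hmaxn 2 h2; omega
      · rw [hR_def, Set.mem_setOf_eq] at hwR
        push_neg at hwR
        obtain ⟨i, hi⟩ := hwR
        exact hA v hv i (hi ▸ hadj)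
    by_cases hsurj : ∀ w : V, ∃ i, p i = w
    · -- Case A1 : H is the path on m vertices, m ≤ 6
      have hm6 : m ≤ 6 := by
        by_contra h7
        push_neg at h7
        refine h2P2P1 (Stmt7Aux.emb_twoP2P1
          (a := p ⟨0, by omega⟩) (b := p ⟨1, by omega⟩) (c := p ⟨3, by omega⟩)
          (d := p ⟨4, by omega⟩) (e := p ⟨6, by omega⟩)
          ((hpp _ _).mpr (by simp)) ((hpp _ _).mpr (by simp))
          (hpne _ _ (by simp)) (hpne _ _ (by simp)) (hpne _ _ (by simp)) (hpne _ _ (by simp))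
          (hpne _ _ (by simp)) (hpne _ _ (by simp)) (hpne _ _ (by simp)) (hpne _ _ (by simp))
          ?_ ?_ ?_ ?_ ?_ ?_ ?_ ?_) <;>
        · rw [hpp]; simp
      have hpbij : Function.Bijective (fun i : Fin m => p i) := ⟨p.injective, fun v => hsurj v⟩
      refine Or.inr (Or.inl ⟨Stmt7Aux.emb_of_equiv (Equiv.ofBijective _ hpbij)
        (fun i => ⟨i.val, by omega⟩) ?_ ?_⟩)
      · intro i j h
        rw [Fin.mk.injEq] at h
        exact Fin.ext h
      · intro i j
        rw [pathGraph_adj, Equiv.ofBijective_apply, Equiv.ofBijective_apply, hpp]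
    · -- Case A2 : H is a short path plus isolated vertices
      push_neg at hsurj
      obtain ⟨z, hz'⟩ := hsurj
      have hz : z ∈ R := fun i h => hz' i h.symm
      have hm4 : m ≤ 4 := by
        by_contra h5
        push_neg at h5
        refine h2P2P1 (Stmt7Aux.emb_twoP2P1
          (a := p ⟨0, by omega⟩) (b := p ⟨1, by omega⟩) (c := p ⟨3, by omega⟩)
          (d := p ⟨4, by omega⟩) (e := z)
          ((hpp _ _).mpr (by simp)) ((hpp _ _).mpr (by simp))
          (hpne _ _ (by simp)) (hpne _ _ (by simp)) (hpne _ _ (by simp)) (hpne _ _ (by simp))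
          (hz' _) (hz' _) (hz' _) (hz' _)
          ?_ ?_ ?_ ?_ ?_ ?_ ?_ ?_)
        · rw [hpp]; simp
        · rw [hpp]; simp
        · rw [hpp]; simp
        · rw [hpp]; simp
        · exact fun h => hiso z hz _ h.symm
        · exact fun h => hiso z hz _ h.symm
        · exact fun h => hiso z hz _ h.symm
        · exact fun h => hiso z hz _ h.symm
      have hfbij : Function.Bijective (Sum.elim (fun i : Fin m => p i) (Subtype.val : R → V)) := by
        constructor
        · rintro (i | r) (i' | r') h <;> simp only [Sum.elim_inl, Sum.elim_inr] at h
          · rw [p.injective h]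
          · exact absurd h.symm (r'.2 i)
          · exact absurd h (r.2 i')
          · rw [Subtype.ext h]
        · intro v
          by_cases hv : ∃ i, p i = v
          · exact ⟨Sum.inl hv.choose, hv.choose_spec⟩
          · exact ⟨Sum.inr ⟨v, fun i h => hv ⟨i, h.symm⟩⟩, rfl⟩
      set ιV := Fintype.equivFin V with hιV
      have hP4 : ∀ a b : Fin (4 + Fintype.card V), (P4kP1 (Fintype.card V)).Adj a b ↔
          (a.val ≠ b.val ∧ ((a.val + 1 = b.val ∧ b.val < 4) ∨ (b.val + 1 = a.val ∧ a.val < 4))) := by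
        intro a b
        rw [P4kP1, fromRel_adj, Ne, Ne, Fin.ext_iff]
      refine Or.inr (Or.inr ⟨Fintype.card V, ⟨Stmt7Aux.emb_of_equiv (Equiv.ofBijective _ hfbij)
        (Sum.elim (fun i => ⟨i.val, by have := i.isLt; omega⟩)
                  (fun r => ⟨4 + (ιV r.1).val, by have := (ιV r.1).isLt; omega⟩)) ?_ ?_⟩⟩)
      · rintro (i | r) (i' | r') h <;>
          simp only [Sum.elim_inl, Sum.elim_inr, Fin.mk.injEq] at h
        · exact congrArg Sum.inl (Fin.ext h)
        · exfalso; have := i.isLt; omega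
        · exfalso; have := i'.isLt; omega
        · have hr : ιV r.1 = ιV r'.1 := Fin.ext (by omega)
          exact congrArg Sum.inr (Subtype.ext (ιV.injective hr))
      · rintro (i | r) (i' | r') <;>
          simp only [Sum.elim_inl, Sum.elim_inr, Equiv.ofBijective_apply, hP4, Fin.val_mk]
        · rw [hpp]
          have h1 := i.isLt; have h2 := i'.isLt
          omega
        · refine iff_of_false (by omega) ?_
          exact fun h => hiso _ r'.2 _ h.symm
        · refine iff_of_false ?_ ?_
          · have := i'.isLt; omega
          · exact fun h => hiso _ r.2 _ h
        · refine iff_of_false (by omega) ?_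
          exact fun h => hiso _ r.2 _ h
  · -- Case B : two nontrivial paths
    have hm2 : 2 ≤ m := le_trans hn2 hnm
    have Eab : H.Adj (p ⟨0, by omega⟩) (p ⟨1, by omega⟩) := (hpp _ _).mpr (by simp)
    have Ecd : H.Adj (q ⟨0, by omega⟩).1 (q ⟨1, by omega⟩).1 := (hqq _ _).mpr (by simp)
    have cross : ∀ (j : Fin n) (i : Fin m), ¬ H.Adj (q j).1 (p i) := fun j i => hA _ (q j).2 i
    have hRq : ∀ v ∈ R, ∃ j : Fin n, (q j).1 = v := by
      intro v hv
      by_contra hno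
      push_neg at hno
      refine h2P2P1 (Stmt7Aux.emb_twoP2P1 Eab Ecd
        (Ne.symm (hqmem _ _)) (Ne.symm (hqmem _ _)) (Ne.symm (hqmem _ _)) (Ne.symm (hqmem _ _))
        (Ne.symm (hv _)) (Ne.symm (hv _)) (hno _) (hno _)
        (fun h => cross _ _ h.symm) (fun h => cross _ _ h.symm)
        (fun h => cross _ _ h.symm) (fun h => cross _ _ h.symm)
        (fun h => hA v hv _ h.symm) (fun h => hA v hv _ h.symm)
        (fun h => hB v hv (fun j he => hno j he.symm) _ h.symm)
        (fun h => hB v hv (fun j he => hno j he.symm) _ h.symm))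
    have hm3 : m ≤ 3 := by
      by_contra h4
      push_neg at h4
      refine h2P2P1 (Stmt7Aux.emb_twoP2P1 (e := p ⟨3, by omega⟩) Eab Ecd
        (Ne.symm (hqmem _ _)) (Ne.symm (hqmem _ _)) (Ne.symm (hqmem _ _)) (Ne.symm (hqmem _ _))
        (hpne _ _ (by simp)) (hpne _ _ (by simp)) (hqmem _ _) (hqmem _ _)
        (fun h => cross _ _ h.symm) (fun h => cross _ _ h.symm)
        (fun h => cross _ _ h.symm) (fun h => cross _ _ h.symm)
        ?_ ?_ (cross _ _) (cross _ _))
      · rw [hpp]; simp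
      · rw [hpp]; simp
    have hsurj : ∀ v : V, (∃ i, p i = v) ∨ (∃ j : Fin n, (q j).1 = v) := by
      intro v
      by_cases h : ∃ i, p i = v
      · exact Or.inl h
      · exact Or.inr (hRq v (fun i hi => h ⟨i, hi.symm⟩))
    have hfbij : Function.Bijective (Sum.elim (fun i : Fin m => p i) (fun j : Fin n => (q j).1)) := by
      constructor
      · rintro (i | j) (i' | j') h <;> simp only [Sum.elim_inl, Sum.elim_inr] at h
        · rw [p.injective h]
        · exact absurd h.symm (hqmem j' i)
        · exact absurd h (hqmem j i')
        · rw [q.injective (Subtype.ext h)]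
      · intro v
        rcases hsurj v with ⟨i, hi⟩ | ⟨j, hj⟩
        · exact ⟨Sum.inl i, hi⟩
        · exact ⟨Sum.inr j, hj⟩
    by_cases h33 : m = 3 ∧ n = 3
    · -- H ≃ 2P3
      obtain ⟨hm', hn'⟩ := h33
      subst hm'
      subst hn'
      letI : DecidableRel twoP3.Adj := fun a b => decidable_of_iff _ (fromRel_adj _ a b).symm
      have htwoP3 : ∀ s t : Fin 6, twoP3.Adj s t ↔
          ((s.val + 1 = t.val ∨ t.val + 1 = s.val) ∧
            ¬(s.val = 2 ∧ t.val = 3) ∧ ¬(s.val = 3 ∧ t.val = 2)) := by decide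
      have hτl : ∀ i : Fin 3, ((finSumFinEquiv (Sum.inl i : Fin 3 ⊕ Fin 3)) : Fin 6).val = i.val := fun _ => rfl
      have hτr : ∀ j : Fin 3, ((finSumFinEquiv (Sum.inr j : Fin 3 ⊕ Fin 3)) : Fin 6).val = 3 + j.val := fun _ => rfl
      refine Or.inl ⟨Stmt7Aux.iso_of_equiv (Equiv.ofBijective _ hfbij)
        (finSumFinEquiv : Fin 3 ⊕ Fin 3 ≃ Fin 6) ?_⟩
      rintro (i | j) (i' | j') <;>
        simp only [Sum.elim_inl, Sum.elim_inr, Equiv.ofBijective_apply,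
          htwoP3, hτl, hτr]
      · rw [hpp]
        have h1 := i.isLt; have h2 := i'.isLt
        omega
      · refine iff_of_false ?_ (fun h => cross _ _ h.symm)
        have h1 := i.isLt; have h2 := j'.isLt
        omega
      · refine iff_of_false ?_ (cross _ _)
        have h1 := j.isLt; have h2 := i'.isLt
        omega
      · rw [hqq]
        have h1 := j.isLt; have h2 := j'.isLt
        omega
    · -- H embeds in P6
      have hmn5 : m + n ≤ 5 := by
        rcases Nat.lt_or_ge m 3 with h | h
        · omega
        · have : n ≠ 3 := fun hn => h33 ⟨by omega, hn⟩
          omega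
      refine Or.inr (Or.inl ⟨Stmt7Aux.emb_of_equiv (Equiv.ofBijective _ hfbij)
        (Sum.elim (fun i => ⟨i.val, by have := i.isLt; omega⟩)
                  (fun j => ⟨m + 1 + j.val, by have := j.isLt; omega⟩)) ?_ ?_⟩)
      · rintro (i | j) (i' | j') h <;>
          simp only [Sum.elim_inl, Sum.elim_inr, Fin.mk.injEq] at h
        · exact congrArg Sum.inl (Fin.ext h)
        · exfalso; have := i.isLt; omega
        · exfalso; have := i'.isLt; omega
        · exact congrArg Sum.inr (Fin.ext (by omega))
      · rintro (i | j) (i' | j') <;>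
          simp only [Sum.elim_inl, Sum.elim_inr, Equiv.ofBijective_apply, pathGraph_adj,
            Fin.val_mk]
        · rw [hpp]
        · refine iff_of_false ?_ (fun h => cross _ _ h.symm)
          have h1 := i.isLt; omega
        · refine iff_of_false ?_ (cross _ _)
          have h1 := i'.isLt; omega
        · rw [hqq]
          omega
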